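/- Let λ > 0, X ∈ ℝ^{n×p}, 2 ≤ r ≤ p, and weights w_{ℓm} > 0. A vector β̂ ∈ ℝ^r with β̂_r > 0 is a minimizer of the r-th row subproblem if and only if there exist vectors a^{(ℓ)} ∈ ℝ^r for ℓ = 1,…,r−1 such that: −(2/β̂_r)e_r + (2/n)X_{1:r}ᵀX_{1:r}β̂ + λ·Σ_{ℓ=1}^{r−1} W^{(ℓ)}∗a^{(ℓ)} = 0, where (a^{(ℓ)})_m = 0 for all m > ℓ; (a^{(ℓ)})_{g_ℓ} = (W^{(ℓ)}∗β̂)_{g_ℓ}/‖(W^{(ℓ)}∗β̂)_{g_ℓ}‖₂ whenever β̂_{g_ℓ} ≠ 0; and ‖(a^{(ℓ)})_{g_ℓ}‖₂ ≤ 1 whenever β̂_{g_ℓ} = 0. Here e_r ∈ ℝ^r is the r-th standard basis vector, g_ℓ = {1,…,ℓ}, W^{(ℓ)} ∈ ℝ^r has m-th entry w_{ℓm} for m ≤ ℓ and 0 otherwise, and ∗ is the entrywise product. -/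

import Mathlib

open Matrix Finset Filter RealInnerProductSpace

private lemma cs_sqrt {ι : Type*} (s : Finset ι) (f g : ι → ℝ) :
    ∑ i ∈ s, f i * g i ≤ Real.sqrt (∑ i ∈ s, f i ^ 2) * Real.sqrt (∑ i ∈ s, g i ^ 2) := by
  calc ∑ i ∈ s, f i * g i ≤ |∑ i ∈ s, f i * g i| := le_abs_self _
    _ = Real.sqrt ((∑ i ∈ s, f i * g i) ^ 2) := (Real.sqrt_sq_eq_abs _).symm
    _ ≤ Real.sqrt ((∑ i ∈ s, f i ^ 2) * ∑ i ∈ s, g i ^ 2) :=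
        Real.sqrt_le_sqrt (sum_mul_sq_le_sq_mul_sq s f g)
    _ = _ := Real.sqrt_mul (by positivity) _

private lemma deriv_nonneg_of_min (Φ : ℝ → ℝ) (d ε : ℝ) (hε : 0 < ε)
    (hd : HasDerivAt Φ d 0) (h : ∀ t : ℝ, 0 < t → t < ε → Φ 0 ≤ Φ t) : 0 ≤ d := by
  have hs : Tendsto (slope Φ 0) (nhdsWithin 0 (Set.Ioi 0)) (nhds d) :=
    (hasDerivAt_iff_tendsto_slope.1 hd).mono_left
      (nhdsWithin_mono _ (fun x hx => ne_of_gt hx))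
  refine ge_of_tendsto hs ?_
  filter_upwards [Ioo_mem_nhdsGT_of_mem (Set.left_mem_Ico.2 hε)] with t ht
  have h1 := h t ht.1 ht.2
  simp only [slope_def_field]
  rw [div_eq_mul_inv]
  exact mul_nonneg (by simpa using sub_nonneg.2 h1) (by simpa using inv_nonneg.2 ht.1.le)

private lemma lemA (n r : ℕ) (hr2 : 2 ≤ r)
    (Xr : Matrix (Fin n) (Fin r) ℝ) (lam : ℝ) (hlam : 0 < lam)
    (w : ℕ → ℕ → ℝ) (hw : ∀ ℓ m : ℕ, m ≤ ℓ → ℓ < r - 1 → 0 < w ℓ m)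
    (F : (Fin r → ℝ) → ℝ)
    (hF : ∀ β : Fin r → ℝ,
      F β = -2 * Real.log (β ⟨r - 1, by omega⟩)
        + (1 / (n : ℝ)) * ∑ i : Fin n, (Xr.mulVec β i) ^ 2
        + lam * ∑ ℓ ∈ Finset.range (r - 1),
            Real.sqrt (∑ m ∈ Finset.univ.filter (fun m : Fin r => (m : ℕ) ≤ ℓ),
              w ℓ (m : ℕ) ^ 2 * β m ^ 2))
    (βh : Fin r → ℝ) (hβpos : 0 < βh ⟨r - 1, by omega⟩)
    (hmin : ∀ β : Fin r → ℝ, 0 < β ⟨r - 1, by omega⟩ → F βh ≤ F β)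
    (v : Fin r → ℝ) :
    0 ≤ -(2 / βh ⟨r - 1, by omega⟩) * v ⟨r - 1, by omega⟩
      + (2 / (n:ℝ)) * ∑ i : Fin n, Xr.mulVec βh i * Xr.mulVec v i
      + lam * ∑ ℓ ∈ Finset.range (r - 1),
          (if ∀ m ∈ Finset.univ.filter (fun m : Fin r => (m : ℕ) ≤ ℓ), βh m = 0 then
            Real.sqrt (∑ m ∈ Finset.univ.filter (fun m : Fin r => (m : ℕ) ≤ ℓ),
              w ℓ (m : ℕ) ^ 2 * v m ^ 2)
          else
            (∑ m ∈ Finset.univ.filter (fun m : Fin r => (m : ℕ) ≤ ℓ),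
              w ℓ (m : ℕ) ^ 2 * βh m * v m) /
              Real.sqrt (∑ m ∈ Finset.univ.filter (fun m : Fin r => (m : ℕ) ≤ ℓ),
                w ℓ (m : ℕ) ^ 2 * βh m ^ 2)) := by
  classical
  set rm : Fin r := ⟨r - 1, by omega⟩ with hrm
  set gs : ℕ → Finset (Fin r) := fun ℓ => Finset.univ.filter (fun m : Fin r => (m : ℕ) ≤ ℓ)
    with hgs
  -- the surrogate function Φ
  set Φ : ℝ → ℝ := fun t =>
    -2 * Real.log (βh rm + t * v rm)
    + (1 / (n:ℝ)) * ∑ i : Fin n, (Xr.mulVec βh i + t * Xr.mulVec v i) ^ 2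
    + lam * ∑ ℓ ∈ Finset.range (r-1),
        (if ∀ m ∈ gs ℓ, βh m = 0 then
            t * Real.sqrt (∑ m ∈ gs ℓ, w ℓ (m:ℕ) ^ 2 * v m ^ 2)
         else Real.sqrt (∑ m ∈ gs ℓ, w ℓ (m:ℕ) ^ 2 * (βh m + t * v m) ^ 2)) with hΦdef
  -- Φ agrees with F along the ray
  have hmv : ∀ (t : ℝ) i, Xr.mulVec (fun j => βh j + t * v j) i
      = Xr.mulVec βh i + t * Xr.mulVec v i := by
    intro t i
    simp only [mulVec, dotProduct, Finset.mul_sum, ← Finset.sum_add_distrib]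
    exact Finset.sum_congr rfl fun j _ => by ring
  have hΦF : ∀ t : ℝ, 0 ≤ t → Φ t = F (fun j => βh j + t * v j) := by
    intro t ht
    rw [hF]
    simp only [hΦdef]
    congr 1
    · congr 2
      exact Finset.sum_congr rfl fun i _ => by rw [hmv]
    · congr 1
      refine Finset.sum_congr rfl fun ℓ hℓ => ?_
      by_cases hz : ∀ m ∈ gs ℓ, βh m = 0
      · rw [if_pos hz]
        have : ∀ m ∈ gs ℓ, w ℓ (m:ℕ) ^ 2 * (βh m + t * v m) ^ 2
            = t ^ 2 * (w ℓ (m:ℕ) ^ 2 * v m ^ 2) := by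
          intro m hm; rw [hz m hm]; ring
        rw [Finset.sum_congr rfl this, ← Finset.mul_sum, Real.sqrt_mul (sq_nonneg t),
          Real.sqrt_sq ht]
      · rw [if_neg hz]
  -- derivative of Φ at 0
  have h0aff : ∀ a b : ℝ, HasDerivAt (fun t : ℝ => a + t * b) b 0 := fun a b => by
    simpa using ((hasDerivAt_id (0:ℝ)).mul_const b).const_add a
  have hlog : HasDerivAt (fun t => -2 * Real.log (βh rm + t * v rm)) (-2 * (v rm / βh rm)) 0 := by
    simpa using ((h0aff (βh rm) (v rm)).log (by simpa using hβpos.ne')).const_mul (-2)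
  have hquad : HasDerivAt
      (fun t => (1/(n:ℝ)) * ∑ i : Fin n, (Xr.mulVec βh i + t * Xr.mulVec v i) ^ 2)
      ((1/(n:ℝ)) * ∑ i : Fin n, 2 * Xr.mulVec βh i * Xr.mulVec v i) 0 :=
    (HasDerivAt.fun_sum fun i _ => by
      simpa using (h0aff (Xr.mulVec βh i) (Xr.mulVec v i)).fun_pow 2).const_mul _
  have hpen : ∀ ℓ ∈ Finset.range (r-1), HasDerivAt
      (fun t => if ∀ m ∈ gs ℓ, βh m = 0 then
            t * Real.sqrt (∑ m ∈ gs ℓ, w ℓ (m:ℕ) ^ 2 * v m ^ 2)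
         else Real.sqrt (∑ m ∈ gs ℓ, w ℓ (m:ℕ) ^ 2 * (βh m + t * v m) ^ 2))
      (if ∀ m ∈ gs ℓ, βh m = 0 then
            Real.sqrt (∑ m ∈ gs ℓ, w ℓ (m:ℕ) ^ 2 * v m ^ 2)
          else
            (∑ m ∈ gs ℓ, w ℓ (m:ℕ) ^ 2 * βh m * v m) /
              Real.sqrt (∑ m ∈ gs ℓ, w ℓ (m:ℕ) ^ 2 * βh m ^ 2)) 0 := by
    intro ℓ hℓ
    by_cases hz : ∀ m ∈ gs ℓ, βh m = 0
    · simp only [if_pos hz]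
      simpa using (hasDerivAt_id (0:ℝ)).mul_const
        (Real.sqrt (∑ m ∈ gs ℓ, w ℓ (m:ℕ) ^ 2 * v m ^ 2))
    · simp only [if_neg hz]
      have hq : HasDerivAt (fun t => ∑ m ∈ gs ℓ, w ℓ (m:ℕ) ^ 2 * (βh m + t * v m) ^ 2)
          (∑ m ∈ gs ℓ, w ℓ (m:ℕ) ^ 2 * (2 * βh m * v m)) 0 :=
        HasDerivAt.fun_sum fun m _ => by
          simpa [mul_assoc] using ((h0aff (βh m) (v m)).pow 2).const_mul (w ℓ (m:ℕ) ^ 2)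
      have hq0 : (∑ m ∈ gs ℓ, w ℓ (m:ℕ) ^ 2 * (βh m + 0 * v m) ^ 2)
          = ∑ m ∈ gs ℓ, w ℓ (m:ℕ) ^ 2 * βh m ^ 2 :=
        Finset.sum_congr rfl fun m _ => by ring
      push_neg at hz
      obtain ⟨m0, hm0, hm0ne⟩ := hz
      have hwpos : 0 < w ℓ (m0:ℕ) :=
        hw ℓ m0 (by simpa [hgs] using (Finset.mem_filter.1 hm0).2) (Finset.mem_range.1 hℓ)
      have hq0pos : 0 < ∑ m ∈ gs ℓ, w ℓ (m:ℕ) ^ 2 * βh m ^ 2 := by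
        refine Finset.sum_pos' (fun m _ => by positivity) ⟨m0, hm0, ?_⟩
        have h2 : 0 < βh m0 ^ 2 := by positivity
        positivity
      have := hq.sqrt (by rw [hq0]; exact hq0pos.ne')
      convert this using 1
      rw [hq0]
      rw [show (∑ m ∈ gs ℓ, w ℓ (m:ℕ) ^ 2 * (2 * βh m * v m))
          = 2 * ∑ m ∈ gs ℓ, w ℓ (m:ℕ) ^ 2 * βh m * v m by
        rw [Finset.mul_sum]; exact Finset.sum_congr rfl fun m _ => by ring]
      rw [mul_div_mul_left _ _ (two_ne_zero)]
  have hΦd : HasDerivAt Φ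
      (-2 * (v rm / βh rm) + (1/(n:ℝ)) * ∑ i : Fin n, 2 * Xr.mulVec βh i * Xr.mulVec v i
        + lam * ∑ ℓ ∈ Finset.range (r-1),
          (if ∀ m ∈ gs ℓ, βh m = 0 then
            Real.sqrt (∑ m ∈ gs ℓ, w ℓ (m:ℕ) ^ 2 * v m ^ 2)
          else
            (∑ m ∈ gs ℓ, w ℓ (m:ℕ) ^ 2 * βh m * v m) /
              Real.sqrt (∑ m ∈ gs ℓ, w ℓ (m:ℕ) ^ 2 * βh m ^ 2))) 0 :=
    (hlog.add hquad).add ((HasDerivAt.fun_sum hpen).const_mul lam)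
  -- minimality along the ray
  set ε : ℝ := βh rm / (|v rm| + 1) with hε
  have hεpos : 0 < ε := by positivity
  have hmono : ∀ t : ℝ, 0 < t → t < ε → Φ 0 ≤ Φ t := by
    intro t ht0 htε
    have hβt : 0 < βh rm + t * v rm := by
      have h1 : t * (|v rm| + 1) < βh rm := (lt_div_iff₀ (by positivity)).1 htε
      nlinarith [mul_le_mul_of_nonneg_left (neg_abs_le (v rm)) ht0.le, abs_nonneg (v rm)]
    have h0 : Φ 0 = F βh := by
      rw [hΦF 0 le_rfl]; congr 1; funext j; simp
    rw [h0, hΦF t ht0.le]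
    exact hmin _ hβt
  have hd := deriv_nonneg_of_min Φ _ ε hεpos hΦd hmono
  calc (0:ℝ) ≤ _ := hd
    _ = _ := by
      have h2 : (∑ i : Fin n, 2 * Xr.mulVec βh i * Xr.mulVec v i)
          = 2 * ∑ i : Fin n, Xr.mulVec βh i * Xr.mulVec v i := by
        rw [Finset.mul_sum]; exact Finset.sum_congr rfl fun i _ => by ring
      rw [h2]; ring

private lemma quad_sum (n r : ℕ) (Xr : Matrix (Fin n) (Fin r) ℝ) (x y : Fin r → ℝ) :
    ∑ i : Fin n, Xr.mulVec x i * Xr.mulVec y i = ∑ j : Fin r, (Xrᵀ * Xr).mulVec x j * y j := by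
  simp only [mulVec, dotProduct, Matrix.mul_apply, transpose_apply, Finset.sum_mul,
    Finset.mul_sum]
  rw [Finset.sum_comm]
  refine Finset.sum_congr rfl fun j _ => ?_
  rw [Finset.sum_comm]
  refine Finset.sum_congr rfl fun k _ => ?_
  refine Finset.sum_congr rfl fun i _ => by ring


private lemma lemB (n r : ℕ) (hr2 : 2 ≤ r)
    (Xr : Matrix (Fin n) (Fin r) ℝ) (lam : ℝ) (hlam : 0 < lam)
    (w : ℕ → ℕ → ℝ) (hw : ∀ ℓ m : ℕ, m ≤ ℓ → ℓ < r - 1 → 0 < w ℓ m)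
    (F : (Fin r → ℝ) → ℝ)
    (hF : ∀ β : Fin r → ℝ,
      F β = -2 * Real.log (β ⟨r - 1, by omega⟩)
        + (1 / (n : ℝ)) * ∑ i : Fin n, (Xr.mulVec β i) ^ 2
        + lam * ∑ ℓ ∈ Finset.range (r - 1),
            Real.sqrt (∑ m ∈ Finset.univ.filter (fun m : Fin r => (m : ℕ) ≤ ℓ),
              w ℓ (m : ℕ) ^ 2 * β m ^ 2))
    (βh : Fin r → ℝ) (hβpos : 0 < βh ⟨r - 1, by omega⟩)
    (a : ℕ → Fin r → ℝ)
    (ha1 : ∀ j : Fin r,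
        -(2 / βh ⟨r - 1, by omega⟩) * (if j = (⟨r - 1, by omega⟩ : Fin r) then 1 else 0)
          + (2 / (n : ℝ)) * ((Xrᵀ * Xr).mulVec βh j)
          + lam * ∑ ℓ ∈ Finset.range (r - 1),
              (if (j : ℕ) ≤ ℓ then w ℓ (j : ℕ) else 0) * a ℓ j = 0)
    (ha3 : ∀ ℓ, ℓ < r - 1 → (¬ ∀ m : Fin r, (m : ℕ) ≤ ℓ → βh m = 0) →
        ∀ m : Fin r, (m : ℕ) ≤ ℓ →
          a ℓ m = w ℓ (m : ℕ) * βh m /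
            Real.sqrt (∑ m' ∈ Finset.univ.filter (fun m' : Fin r => (m' : ℕ) ≤ ℓ),
              (w ℓ (m' : ℕ) * βh m') ^ 2))
    (ha4 : ∀ ℓ, ℓ < r - 1 → (∀ m : Fin r, (m : ℕ) ≤ ℓ → βh m = 0) →
        Real.sqrt (∑ m ∈ Finset.univ.filter (fun m : Fin r => (m : ℕ) ≤ ℓ),
          a ℓ m ^ 2) ≤ 1) :
    ∀ β : Fin r → ℝ, 0 < β ⟨r - 1, by omega⟩ → F βh ≤ F β := by
  classical
  intro β hβr
  set rm : Fin r := ⟨r - 1, by omega⟩ with hrm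
  set gs : ℕ → Finset (Fin r) := fun ℓ => Finset.univ.filter (fun m : Fin r => (m : ℕ) ≤ ℓ)
    with hgs
  set δ : Fin r → ℝ := fun j => β j - βh j with hδ
  -- log part
  have hlog : -(2 / βh rm) * δ rm ≤ (-2 * Real.log (β rm)) - (-2 * Real.log (βh rm)) := by
    have h1 := Real.log_le_sub_one_of_pos (show 0 < β rm / βh rm by positivity)
    rw [Real.log_div hβr.ne' hβpos.ne'] at h1
    have h2 : -(2 / βh rm) * δ rm = -2 * (β rm / βh rm - 1) := by
      simp only [hδ]; field_simp
    rw [h2]; nlinarith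
  -- quadratic part
  have hlin : ∀ i, Xr.mulVec δ i = Xr.mulVec β i - Xr.mulVec βh i := by
    intro i
    simp only [hδ, mulVec, dotProduct, ← Finset.sum_sub_distrib]
    exact Finset.sum_congr rfl fun j _ => by ring
  have hquad : (2 / (n:ℝ)) * ∑ i : Fin n, Xr.mulVec βh i * Xr.mulVec δ i
      ≤ (1 / (n:ℝ)) * ∑ i : Fin n, (Xr.mulVec β i) ^ 2
        - (1 / (n:ℝ)) * ∑ i : Fin n, (Xr.mulVec βh i) ^ 2 := by
    have hsum : ∑ i : Fin n, 2 * (Xr.mulVec βh i * Xr.mulVec δ i)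
        ≤ ∑ i : Fin n, ((Xr.mulVec β i) ^ 2 - (Xr.mulVec βh i) ^ 2) :=
      Finset.sum_le_sum fun i _ => by
        rw [hlin i]; nlinarith [sq_nonneg (Xr.mulVec β i - Xr.mulVec βh i)]
    have hn : (0:ℝ) ≤ 1 / (n:ℝ) := by positivity
    have := mul_le_mul_of_nonneg_left hsum hn
    rw [Finset.mul_sum, Finset.mul_sum] at this
    calc (2 / (n:ℝ)) * ∑ i : Fin n, Xr.mulVec βh i * Xr.mulVec δ i
        = ∑ i : Fin n, (1/(n:ℝ)) * (2 * (Xr.mulVec βh i * Xr.mulVec δ i)) := by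
          rw [← Finset.mul_sum, ← Finset.mul_sum]; ring
      _ ≤ ∑ i : Fin n, (1/(n:ℝ)) * ((Xr.mulVec β i) ^ 2 - (Xr.mulVec βh i) ^ 2) := this
      _ = _ := by rw [← Finset.mul_sum, Finset.sum_sub_distrib]; ring
  -- penalty part
  have hpen : ∀ ℓ ∈ Finset.range (r - 1),
      ∑ m ∈ gs ℓ, (w ℓ (m:ℕ) * a ℓ m) * δ m
        ≤ Real.sqrt (∑ m ∈ gs ℓ, w ℓ (m:ℕ) ^ 2 * β m ^ 2)
          - Real.sqrt (∑ m ∈ gs ℓ, w ℓ (m:ℕ) ^ 2 * βh m ^ 2) := by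
    intro ℓ hℓ
    have hℓr : ℓ < r - 1 := Finset.mem_range.1 hℓ
    have hmem : ∀ m : Fin r, m ∈ gs ℓ ↔ (m:ℕ) ≤ ℓ := fun m => by simp [hgs]
    have hsqβ : (∑ m ∈ gs ℓ, w ℓ (m:ℕ) ^ 2 * β m ^ 2) = ∑ m ∈ gs ℓ, (w ℓ (m:ℕ) * β m) ^ 2 :=
      Finset.sum_congr rfl fun m _ => by ring
    have hsqβh : (∑ m ∈ gs ℓ, w ℓ (m:ℕ) ^ 2 * βh m ^ 2) = ∑ m ∈ gs ℓ, (w ℓ (m:ℕ) * βh m) ^ 2 :=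
      Finset.sum_congr rfl fun m _ => by ring
    by_cases hz : ∀ m : Fin r, (m:ℕ) ≤ ℓ → βh m = 0
    · have h0 : (∑ m ∈ gs ℓ, w ℓ (m:ℕ) ^ 2 * βh m ^ 2) = 0 :=
        Finset.sum_eq_zero fun m hm => by rw [hz m ((hmem m).1 hm)]; ring
      rw [h0, Real.sqrt_zero, sub_zero]
      have h1 : ∑ m ∈ gs ℓ, (w ℓ (m:ℕ) * a ℓ m) * δ m
          = ∑ m ∈ gs ℓ, a ℓ m * (w ℓ (m:ℕ) * β m) := by
        refine Finset.sum_congr rfl fun m hm => ?_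
        have : βh m = 0 := hz m ((hmem m).1 hm)
        simp only [hδ, this]; ring
      rw [h1, hsqβ]
      calc ∑ m ∈ gs ℓ, a ℓ m * (w ℓ (m:ℕ) * β m)
          ≤ Real.sqrt (∑ m ∈ gs ℓ, a ℓ m ^ 2)
            * Real.sqrt (∑ m ∈ gs ℓ, (w ℓ (m:ℕ) * β m) ^ 2) := cs_sqrt _ _ _
        _ ≤ 1 * Real.sqrt (∑ m ∈ gs ℓ, (w ℓ (m:ℕ) * β m) ^ 2) :=
            mul_le_mul_of_nonneg_right (ha4 ℓ hℓr hz) (Real.sqrt_nonneg _)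
        _ = _ := one_mul _
    · set N : ℝ := Real.sqrt (∑ m' ∈ gs ℓ, (w ℓ (m':ℕ) * βh m') ^ 2) with hN
      push_neg at hz
      obtain ⟨m0, hm0le, hm0ne⟩ := hz
      have hNpos : 0 < N := by
        rw [hN]
        apply Real.sqrt_pos.2
        refine Finset.sum_pos' (fun m _ => sq_nonneg _) ⟨m0, (hmem m0).2 hm0le, ?_⟩
        have hwpos := hw ℓ (m0:ℕ) hm0le hℓr
        positivity
      have hzne : ¬ ∀ m : Fin r, (m:ℕ) ≤ ℓ → βh m = 0 := by
        push_neg; exact ⟨m0, hm0le, hm0ne⟩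
      have haval : ∀ m ∈ gs ℓ, a ℓ m = w ℓ (m:ℕ) * βh m / N :=
        fun m hm => ha3 ℓ hℓr hzne m ((hmem m).1 hm)
      have h1 : ∑ m ∈ gs ℓ, (w ℓ (m:ℕ) * a ℓ m) * δ m
          = (∑ m ∈ gs ℓ, (w ℓ (m:ℕ) * βh m) * (w ℓ (m:ℕ) * β m)) / N
            - (∑ m ∈ gs ℓ, (w ℓ (m:ℕ) * βh m) ^ 2) / N := by
        rw [← sub_div, ← Finset.sum_sub_distrib, Finset.sum_div]
        refine Finset.sum_congr rfl fun m hm => ?_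
        rw [haval m hm]
        simp only [hδ]
        field_simp [hNpos.ne']
        try ring
      have hNsq : (∑ m ∈ gs ℓ, (w ℓ (m:ℕ) * βh m) ^ 2) = N ^ 2 := by
        rw [hN, Real.sq_sqrt (Finset.sum_nonneg fun m _ => sq_nonneg _)]
      have hcs : ∑ m ∈ gs ℓ, (w ℓ (m:ℕ) * βh m) * (w ℓ (m:ℕ) * β m)
          ≤ N * Real.sqrt (∑ m ∈ gs ℓ, (w ℓ (m:ℕ) * β m) ^ 2) := by
        simpa [hN] using cs_sqrt (gs ℓ) (fun m => w ℓ (m:ℕ) * βh m) (fun m => w ℓ (m:ℕ) * β m)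
      rw [h1, hsqβ, hsqβh, ← hN, hNsq]
      have h2 : N ^ 2 / N = N := by
        rw [sq, mul_div_assoc, div_self hNpos.ne', mul_one]
      rw [h2]
      have h3 : (∑ m ∈ gs ℓ, (w ℓ (m:ℕ) * βh m) * (w ℓ (m:ℕ) * β m)) / N
          ≤ (N * Real.sqrt (∑ m ∈ gs ℓ, (w ℓ (m:ℕ) * β m) ^ 2)) / N :=
        (div_le_div_iff_of_pos_right hNpos).2 hcs
      calc (∑ m ∈ gs ℓ, (w ℓ (m:ℕ) * βh m) * (w ℓ (m:ℕ) * β m)) / N - N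
          ≤ (N * Real.sqrt (∑ m ∈ gs ℓ, (w ℓ (m:ℕ) * β m) ^ 2)) / N - N := by linarith
        _ = Real.sqrt (∑ m ∈ gs ℓ, (w ℓ (m:ℕ) * β m) ^ 2) - N := by
            rw [mul_div_cancel_left₀ _ hNpos.ne']
  -- stationarity combination
  have hS1 : ∑ j : Fin r, (-(2 / βh rm) * (if j = rm then 1 else 0)) * δ j
      = -(2 / βh rm) * δ rm := by
    simp [ite_mul, mul_ite, mul_one, mul_zero, zero_mul, Finset.sum_ite_eq']
  have hS2 : ∑ j : Fin r, ((2 / (n:ℝ)) * ((Xrᵀ * Xr).mulVec βh j)) * δ j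
      = (2 / (n:ℝ)) * ∑ i : Fin n, Xr.mulVec βh i * Xr.mulVec δ i := by
    rw [quad_sum n r Xr βh δ, Finset.mul_sum]
    exact Finset.sum_congr rfl fun j _ => by ring
  have hS3 : ∑ j : Fin r,
      (lam * ∑ ℓ ∈ Finset.range (r-1), (if (j:ℕ) ≤ ℓ then w ℓ (j:ℕ) else 0) * a ℓ j) * δ j
      = lam * ∑ ℓ ∈ Finset.range (r-1), ∑ m ∈ gs ℓ, (w ℓ (m:ℕ) * a ℓ m) * δ m := by
    rw [Finset.mul_sum]
    have h1 : ∀ j : Fin r,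
        (lam * ∑ ℓ ∈ Finset.range (r-1), (if (j:ℕ) ≤ ℓ then w ℓ (j:ℕ) else 0) * a ℓ j) * δ j
        = ∑ ℓ ∈ Finset.range (r-1),
            lam * ((if (j:ℕ) ≤ ℓ then w ℓ (j:ℕ) else 0) * a ℓ j * δ j) := by
      intro j
      rw [Finset.mul_sum, Finset.sum_mul]
      exact Finset.sum_congr rfl fun ℓ _ => by ring
    rw [Finset.sum_congr rfl fun j _ => h1 j, Finset.sum_comm]
    refine Finset.sum_congr rfl fun ℓ _ => ?_
    rw [← Finset.mul_sum]
    congr 1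
    rw [hgs, Finset.sum_filter]
    refine Finset.sum_congr rfl fun m _ => ?_
    by_cases hm : (m:ℕ) ≤ ℓ
    · simp only [if_pos hm]; try ring
    · simp only [if_neg hm]; try ring
  have key : -(2 / βh rm) * δ rm
      + (2 / (n:ℝ)) * ∑ i : Fin n, Xr.mulVec βh i * Xr.mulVec δ i
      + lam * ∑ ℓ ∈ Finset.range (r-1), ∑ m ∈ gs ℓ, (w ℓ (m:ℕ) * a ℓ m) * δ m = 0 := by
    rw [← hS1, ← hS2, ← hS3, ← Finset.sum_add_distrib, ← Finset.sum_add_distrib]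
    refine Finset.sum_eq_zero fun j _ => ?_
    have := ha1 j
    calc _ = (-(2 / βh rm) * (if j = rm then 1 else 0)
          + (2 / (n:ℝ)) * ((Xrᵀ * Xr).mulVec βh j)
          + lam * ∑ ℓ ∈ Finset.range (r-1), (if (j:ℕ) ≤ ℓ then w ℓ (j:ℕ) else 0) * a ℓ j) * δ j
        := by ring
      _ = 0 := by rw [this]; ring
  have hpsum : ∑ ℓ ∈ Finset.range (r-1), ∑ m ∈ gs ℓ, (w ℓ (m:ℕ) * a ℓ m) * δ m
      ≤ (∑ ℓ ∈ Finset.range (r-1),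
          Real.sqrt (∑ m ∈ gs ℓ, w ℓ (m:ℕ) ^ 2 * β m ^ 2))
        - ∑ ℓ ∈ Finset.range (r-1),
          Real.sqrt (∑ m ∈ gs ℓ, w ℓ (m:ℕ) ^ 2 * βh m ^ 2) := by
    rw [← Finset.sum_sub_distrib]
    exact Finset.sum_le_sum hpen
  have hlampen := mul_le_mul_of_nonneg_left hpsum hlam.le
  rw [hF β, hF βh]
  rw [mul_sub] at hlampen
  linarith [hlog, hquad, key, hlampen]


private lemma sq_sum_le_one_of_sqrt {r : ℕ} (x : EuclideanSpace ℝ (Fin r))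
    (h : ‖x‖ ≤ 1) : ∑ m : Fin r, (x m) ^ 2 ≤ 1 := by
  rw [EuclideanSpace.norm_eq] at h
  have h0 : (0:ℝ) ≤ ∑ m : Fin r, ‖x m‖ ^ 2 := by positivity
  have := Real.sq_sqrt h0
  have h2 : ∑ m : Fin r, (x m) ^ 2 = ∑ m : Fin r, ‖x m‖ ^ 2 :=
    Finset.sum_congr rfl fun m _ => (sq_abs _).symm
  nlinarith [Real.sqrt_nonneg (∑ m : Fin r, ‖x m‖ ^ 2)]

private lemma dual_exists (r : ℕ) (T : Finset ℕ) (c : ℕ → Fin r → ℝ) (u : Fin r → ℝ)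
    (hu : ∀ v : Fin r → ℝ, ∑ j : Fin r, u j * v j
        ≤ ∑ ℓ ∈ T, Real.sqrt (∑ m : Fin r, (c ℓ m * v m) ^ 2)) :
    ∃ b : ℕ → Fin r → ℝ, (∀ ℓ ∈ T, ∑ m : Fin r, (b ℓ m) ^ 2 ≤ 1) ∧
      ∀ j : Fin r, ∑ ℓ ∈ T, c ℓ j * b ℓ j = u j := by
  classical
  set E := EuclideanSpace ℝ (Fin r) with hE
  set EQ : E ≃L[ℝ] (Fin r → ℝ) := EuclideanSpace.equiv (Fin r) ℝ with hEQ
  set ϕ : (ℕ → E) → E := fun b => EQ.symm (fun j => ∑ ℓ ∈ T, c ℓ j * EQ (b ℓ) j) with hϕ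
  set S : Set (ℕ → E) := Set.pi Set.univ
    (fun ℓ => if ℓ ∈ T then Metric.closedBall (0:E) 1 else {0}) with hS
  set K : Set E := ϕ '' S with hK
  have hScomp : IsCompact S := isCompact_univ_pi fun ℓ => by
    by_cases h : ℓ ∈ T
    · rw [if_pos h]; exact isCompact_closedBall _ _
    · rw [if_neg h]; exact isCompact_singleton
  have hSconv : Convex ℝ S := convex_pi fun ℓ _ => by
    by_cases h : ℓ ∈ T
    · rw [if_pos h]; exact convex_closedBall _ _
    · rw [if_neg h]; exact convex_singleton _
  have hϕlin : IsLinearMap ℝ ϕ := by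
    constructor
    · intro b1 b2
      rw [hϕ]
      simp only
      rw [← map_add]
      congr 1
      funext j
      simp only [Pi.add_apply, ← Finset.sum_add_distrib]
      refine Finset.sum_congr rfl fun ℓ _ => ?_
      rw [map_add, Pi.add_apply]; ring
    · intro t b
      rw [hϕ]
      simp only
      rw [← _root_.map_smul]
      congr 1
      funext j
      simp only [Pi.smul_apply, smul_eq_mul, Finset.mul_sum]
      refine Finset.sum_congr rfl fun ℓ _ => ?_
      rw [_root_.map_smul, Pi.smul_apply, smul_eq_mul]; ring
  have hϕcont : Continuous ϕ :=
    EQ.symm.continuous.comp (continuous_pi fun j => continuous_finset_sum T fun ℓ _ =>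
      continuous_const.mul ((continuous_apply j).comp (EQ.continuous.comp (continuous_apply ℓ))))
  have hKcomp : IsCompact K := hScomp.image hϕcont
  have hKconv : Convex ℝ K := hSconv.is_linear_image hϕlin
  have huK : EQ.symm u ∈ K := by
    by_contra hout
    obtain ⟨f, s, hfs, hsu⟩ := geometric_hahn_banach_closed_point hKconv hKcomp.isClosed hout
    set vE : E := (InnerProductSpace.toDual ℝ E).symm f with hvE
    have hfval : ∀ y : E, f y = ∑ j : Fin r, EQ vE j * EQ y j := by
      intro y
      have h1 : ⟪vE, y⟫ = f y := by
        rw [hvE]; exact InnerProductSpace.toDual_symm_apply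
      rw [← h1, PiLp.inner_apply]
      refine Finset.sum_congr rfl fun j _ => ?_
      simp only [RCLike.inner_apply, starRingEnd_apply, star_trivial]
      exact mul_comm _ _
    set v : Fin r → ℝ := fun j => EQ vE j with hv
    set Nv : ℕ → ℝ := fun ℓ => Real.sqrt (∑ m : Fin r, (c ℓ m * v m) ^ 2) with hNv
    set bstar : ℕ → E := fun ℓ => if ℓ ∈ T ∧ Nv ℓ ≠ 0
      then EQ.symm (fun m => c ℓ m * v m / Nv ℓ) else 0 with hbstar
    have hbS : bstar ∈ S := by
      rw [hS]
      intro ℓ _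
      simp only
      by_cases h : ℓ ∈ T
      · rw [if_pos h]
        by_cases h2 : Nv ℓ = 0
        · rw [hbstar]; simp only [h2, ne_eq, not_true_eq_false, and_false, if_false]
          exact Metric.mem_closedBall_self zero_le_one
        · rw [hbstar]; simp only [h, h2, ne_eq, not_false_eq_true, and_self, if_true]
          rw [Metric.mem_closedBall, dist_zero_right, EuclideanSpace.norm_eq]
          have hNpos : 0 < Nv ℓ := lt_of_le_of_ne (Real.sqrt_nonneg _) (Ne.symm h2)
          have hsum : ∑ m : Fin r, ‖EQ.symm (fun m => c ℓ m * v m / Nv ℓ) m‖ ^ 2 = 1 := by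
            have : ∀ m : Fin r, ‖EQ.symm (fun m => c ℓ m * v m / Nv ℓ) m‖ ^ 2
                = (c ℓ m * v m) ^ 2 / Nv ℓ ^ 2 := by
              intro m
              rw [Real.norm_eq_abs, sq_abs]
              show (c ℓ m * v m / Nv ℓ) ^ 2 = _
              rw [div_pow]
            rw [Finset.sum_congr rfl fun m _ => this m, ← Finset.sum_div]
            rw [show (∑ m : Fin r, (c ℓ m * v m) ^ 2) = Nv ℓ ^ 2 by
              rw [hNv]; exact (Real.sq_sqrt (by positivity)).symm]
            field_simp
          rw [hsum, Real.sqrt_one]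
      · rw [if_neg h, hbstar]
        simp only [h, false_and, if_false]
        rfl
    have hfb : f (ϕ bstar) = ∑ ℓ ∈ T, Nv ℓ := by
      rw [hfval]
      have h1 : ∀ j : Fin r, EQ (ϕ bstar) j = ∑ ℓ ∈ T, c ℓ j * EQ (bstar ℓ) j := by
        intro j
        rw [hϕ]
        simp
      rw [Finset.sum_congr rfl fun j _ => by rw [h1 j]]
      rw [show (∑ j : Fin r, EQ vE j * ∑ ℓ ∈ T, c ℓ j * EQ (bstar ℓ) j)
          = ∑ j : Fin r, ∑ ℓ ∈ T, v j * (c ℓ j * EQ (bstar ℓ) j) from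
        Finset.sum_congr rfl fun j _ => by rw [Finset.mul_sum]]
      rw [Finset.sum_comm]
      refine Finset.sum_congr rfl fun ℓ hℓ => ?_
      by_cases h2 : Nv ℓ = 0
      · have hterm : ∀ j : Fin r, c ℓ j * v j = 0 := by
          intro j
          have h3 : ∑ m : Fin r, (c ℓ m * v m) ^ 2 = 0 := by
            have h4 : Real.sqrt (∑ m : Fin r, (c ℓ m * v m) ^ 2) = 0 := h2
            have h5 := Real.sqrt_eq_zero'.1 h4
            exact le_antisymm h5 (by positivity)
          have := (Finset.sum_eq_zero_iff_of_nonneg (fun m _ => sq_nonneg _)).1 h3 j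
            (Finset.mem_univ j)
          exact pow_eq_zero_iff (n := 2) (by norm_num) |>.1 this
        rw [h2]
        refine Finset.sum_eq_zero fun j _ => ?_
        rw [show v j * (c ℓ j * EQ (bstar ℓ) j) = (c ℓ j * v j) * EQ (bstar ℓ) j from by ring,
          hterm j, zero_mul]
      · rw [hbstar]
        simp only [Finset.mem_coe, hℓ, h2, ne_eq, not_false_eq_true, and_self, if_true]
        have hEqsymm : ∀ (g : Fin r → ℝ) (j : Fin r), EQ (EQ.symm g) j = g j := by
          intro g j; rw [ContinuousLinearEquiv.apply_symm_apply]
        rw [Finset.sum_congr rfl fun j _ => by rw [hEqsymm (fun m => c ℓ m * v m / Nv ℓ) j]]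
        rw [show (∑ j : Fin r, v j * (c ℓ j * (c ℓ j * v j / Nv ℓ)))
            = (∑ j : Fin r, (c ℓ j * v j) ^ 2) / Nv ℓ from by
          rw [Finset.sum_div]; exact Finset.sum_congr rfl fun j _ => by field_simp]
        rw [show (∑ m : Fin r, (c ℓ m * v m) ^ 2) = Nv ℓ ^ 2 from by
          rw [hNv]; exact (Real.sq_sqrt (by positivity)).symm]
        rw [sq, mul_div_assoc, div_self h2, mul_one]
    have hcontr : f (EQ.symm u) ≤ f (ϕ bstar) := by
      rw [hfb, hfval]
      have h1 : ∀ j : Fin r, EQ (EQ.symm u) j = u j := fun j => by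
        rw [ContinuousLinearEquiv.apply_symm_apply]
      rw [Finset.sum_congr rfl fun j _ => by rw [h1 j]]
      rw [show (∑ j : Fin r, EQ vE j * u j) = ∑ j : Fin r, u j * v j from
        Finset.sum_congr rfl fun j _ => by rw [hv]; ring]
      exact hu v
    have := hfs (ϕ bstar) ⟨bstar, hbS, rfl⟩
    linarith
  obtain ⟨b, hbS, hbeq⟩ := huK
  refine ⟨fun ℓ => EQ (b ℓ), fun ℓ hℓ => ?_, fun j => ?_⟩
  · have := hbS ℓ (Set.mem_univ ℓ)
    simp only [if_pos hℓ] at this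
    rw [Metric.mem_closedBall, dist_zero_right] at this
    exact sq_sum_le_one_of_sqrt (b ℓ) this
  · have := congrArg (fun x => EQ x j) hbeq
    rw [show EQ (ϕ b) j = ∑ ℓ ∈ T, c ℓ j * EQ (b ℓ) j from by rw [hϕ]; simp] at this
    rw [this]
    rw [ContinuousLinearEquiv.apply_symm_apply]

/-- optimality conditions, Lemma `theory:opt_cond`: `β̂` with `β̂_r > 0`
minimizes the `r`-th row subproblem iff there are dual vectors `a^{(ℓ)}` satisfying the
stationarity equation and the (sub)gradient conditions of the hierarchical group lasso
penalty.  Coordinates of `ℝ^r` are 0-based; the `r`-th coordinate is `⟨r−1,·⟩`; group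
`ℓ ∈ {0,…,r−2}` is `{m : (m:ℕ) ≤ ℓ}` with weight vector `W^{(ℓ)}` supported there. -/
theorem stmt_7 (n p r : ℕ) (hr2 : 2 ≤ r) (hrp : r ≤ p)
    (X : Matrix (Fin n) (Fin p) ℝ) (lam : ℝ) (hlam : 0 < lam)
    (w : ℕ → ℕ → ℝ) (hw : ∀ ℓ m : ℕ, m ≤ ℓ → ℓ < r - 1 → 0 < w ℓ m)
    (Xr : Matrix (Fin n) (Fin r) ℝ) (hXr : ∀ i j, Xr i j = X i (Fin.castLE hrp j))
    (F : (Fin r → ℝ) → ℝ)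
    (hF : ∀ β : Fin r → ℝ,
      F β = -2 * Real.log (β ⟨r - 1, by omega⟩)
        + (1 / (n : ℝ)) * ∑ i : Fin n, (Xr.mulVec β i) ^ 2
        + lam * ∑ ℓ ∈ Finset.range (r - 1),
            Real.sqrt (∑ m ∈ Finset.univ.filter (fun m : Fin r => (m : ℕ) ≤ ℓ),
              w ℓ (m : ℕ) ^ 2 * β m ^ 2))
    (βh : Fin r → ℝ) (hβpos : 0 < βh ⟨r - 1, by omega⟩) :
    (∀ β : Fin r → ℝ, 0 < β ⟨r - 1, by omega⟩ → F βh ≤ F β) ↔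
    ∃ a : ℕ → Fin r → ℝ,
      (∀ j : Fin r,
        -(2 / βh ⟨r - 1, by omega⟩) * (if j = (⟨r - 1, by omega⟩ : Fin r) then 1 else 0)
          + (2 / (n : ℝ)) * ((Xrᵀ * Xr).mulVec βh j)
          + lam * ∑ ℓ ∈ Finset.range (r - 1),
              (if (j : ℕ) ≤ ℓ then w ℓ (j : ℕ) else 0) * a ℓ j = 0) ∧
      (∀ ℓ, ℓ < r - 1 → ∀ m : Fin r, ℓ < (m : ℕ) → a ℓ m = 0) ∧
      (∀ ℓ, ℓ < r - 1 → (¬ ∀ m : Fin r, (m : ℕ) ≤ ℓ → βh m = 0) →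
        ∀ m : Fin r, (m : ℕ) ≤ ℓ →
          a ℓ m = w ℓ (m : ℕ) * βh m /
            Real.sqrt (∑ m' ∈ Finset.univ.filter (fun m' : Fin r => (m' : ℕ) ≤ ℓ),
              (w ℓ (m' : ℕ) * βh m') ^ 2)) ∧
      (∀ ℓ, ℓ < r - 1 → (∀ m : Fin r, (m : ℕ) ≤ ℓ → βh m = 0) →
        Real.sqrt (∑ m ∈ Finset.univ.filter (fun m : Fin r => (m : ℕ) ≤ ℓ),
          a ℓ m ^ 2) ≤ 1) := by
  classical
  constructor
  · intro hmin
    set rm : Fin r := ⟨r - 1, by omega⟩ with hrm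
    set gs : ℕ → Finset (Fin r) := fun ℓ => Finset.univ.filter (fun m : Fin r => (m : ℕ) ≤ ℓ)
      with hgs
    have hmemgs : ∀ (ℓ : ℕ) (m : Fin r), m ∈ gs ℓ ↔ (m:ℕ) ≤ ℓ := fun ℓ m => by simp [hgs]
    set G : Fin r → ℝ := fun j => -(2 / βh rm) * (if j = rm then 1 else 0)
        + (2 / (n:ℝ)) * ((Xrᵀ * Xr).mulVec βh j) with hG
    set N : ℕ → ℝ := fun ℓ => Real.sqrt (∑ m' ∈ gs ℓ, (w ℓ (m':ℕ) * βh m') ^ 2) with hN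
    have hsqN : ∀ ℓ : ℕ, Real.sqrt (∑ m ∈ gs ℓ, w ℓ (m:ℕ) ^ 2 * βh m ^ 2) = N ℓ := by
      intro ℓ
      rw [hN]
      congr 1
      exact Finset.sum_congr rfl fun m _ => by ring
    -- master inequality from lemA
    have hA : ∀ v : Fin r → ℝ,
        0 ≤ (∑ j : Fin r, G j * v j) + lam * ∑ ℓ ∈ Finset.range (r-1),
          (if ∀ m ∈ gs ℓ, βh m = 0 then
            Real.sqrt (∑ m ∈ gs ℓ, w ℓ (m:ℕ) ^ 2 * v m ^ 2)
          else (∑ m ∈ gs ℓ, w ℓ (m:ℕ) ^ 2 * βh m * v m) /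
            Real.sqrt (∑ m ∈ gs ℓ, w ℓ (m:ℕ) ^ 2 * βh m ^ 2)) := by
      intro v
      have h := lemA n r hr2 Xr lam hlam w hw F hF βh hβpos hmin v
      have hG' : (∑ j : Fin r, G j * v j)
          = -(2 / βh rm) * v rm
            + (2 / (n:ℝ)) * ∑ i : Fin n, Xr.mulVec βh i * Xr.mulVec v i := by
        have h1 : ∀ j : Fin r, G j * v j
            = (-(2 / βh rm)) * ((if j = rm then 1 else 0) * v j)
              + (2 / (n:ℝ)) * ((Xrᵀ * Xr).mulVec βh j * v j) := fun j => by
          rw [hG]; ring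
        rw [Finset.sum_congr rfl fun j _ => h1 j, Finset.sum_add_distrib,
          ← Finset.mul_sum, ← Finset.mul_sum, ← quad_sum n r Xr βh v]
        congr 2
        simp [ite_mul, Finset.sum_ite_eq']
      rw [hG']
      exact h
    -- stationarity for coordinates avoiding inactive groups
    have hstat : ∀ j : Fin r, (∀ ℓ, ℓ < r - 1 → (j:ℕ) ≤ ℓ → ¬ (∀ m ∈ gs ℓ, βh m = 0)) →
        G j + lam * ∑ ℓ ∈ Finset.range (r-1),
          (if (j:ℕ) ≤ ℓ then w ℓ (j:ℕ) else 0) * (w ℓ (j:ℕ) * βh j / N ℓ) = 0 := by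
      intro j hj
      have hc : ∀ c : ℝ, 0 ≤ c * (G j + lam * ∑ ℓ ∈ Finset.range (r-1),
          (if (j:ℕ) ≤ ℓ then w ℓ (j:ℕ) else 0) * (w ℓ (j:ℕ) * βh j / N ℓ)) := by
        intro c
        have h := hA (fun j' => if j' = j then c else 0)
        have h1 : (∑ j' : Fin r, G j' * (if j' = j then c else 0)) = G j * c := by
          simp [mul_ite, Finset.sum_ite_eq']
        have h2 : ∀ ℓ ∈ Finset.range (r-1),
            (if ∀ m ∈ gs ℓ, βh m = 0 then
              Real.sqrt (∑ m ∈ gs ℓ, w ℓ (m:ℕ) ^ 2 * (if m = j then c else 0) ^ 2)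
            else (∑ m ∈ gs ℓ, w ℓ (m:ℕ) ^ 2 * βh m * (if m = j then c else 0)) /
              Real.sqrt (∑ m ∈ gs ℓ, w ℓ (m:ℕ) ^ 2 * βh m ^ 2))
            = ((if (j:ℕ) ≤ ℓ then w ℓ (j:ℕ) else 0) * (w ℓ (j:ℕ) * βh j / N ℓ)) * c := by
          intro ℓ hℓ
          have hℓr := Finset.mem_range.1 hℓ
          by_cases hz : ∀ m ∈ gs ℓ, βh m = 0
          · rw [if_pos hz]
            have hjℓ : ¬ (j:ℕ) ≤ ℓ := fun hle => hj ℓ hℓr hle hz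
            rw [if_neg hjℓ]
            have h3 : (∑ m ∈ gs ℓ, w ℓ (m:ℕ) ^ 2 * (if m = j then c else 0) ^ 2) = 0 := by
              refine Finset.sum_eq_zero fun m hm => ?_
              have hmj : m ≠ j := fun he => hjℓ (he ▸ (hmemgs ℓ m).1 hm)
              rw [if_neg hmj]
              ring
            rw [h3, Real.sqrt_zero]
            ring
          · rw [if_neg hz]
            have hnum : (∑ m ∈ gs ℓ, w ℓ (m:ℕ) ^ 2 * βh m * (if m = j then c else 0))
                = (if (j:ℕ) ≤ ℓ then w ℓ (j:ℕ) ^ 2 * βh j * c else 0) := by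
              have h4 : ∀ m ∈ gs ℓ, w ℓ (m:ℕ) ^ 2 * βh m * (if m = j then c else 0)
                  = if m = j then w ℓ (m:ℕ) ^ 2 * βh m * c else 0 := by
                intro m _; by_cases hmj : m = j
                · rw [if_pos hmj, if_pos hmj]
                · rw [if_neg hmj, if_neg hmj]; ring
              rw [Finset.sum_congr rfl h4, Finset.sum_ite_eq' (gs ℓ) j]
              by_cases hjl : (j:ℕ) ≤ ℓ
              · rw [if_pos ((hmemgs ℓ j).2 hjl), if_pos hjl]
              · rw [if_neg (fun hm => hjl ((hmemgs ℓ j).1 hm)), if_neg hjl]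
            rw [hnum, hsqN ℓ]
            push_neg at hz
            obtain ⟨m0, hm0, hm0ne⟩ := hz
            have hNpos : 0 < N ℓ := by
              rw [hN]
              apply Real.sqrt_pos.2
              refine Finset.sum_pos' (fun m _ => sq_nonneg _) ⟨m0, hm0, ?_⟩
              have hwp := hw ℓ (m0:ℕ) ((hmemgs ℓ m0).1 hm0) hℓr
              positivity
            by_cases hjl : (j:ℕ) ≤ ℓ
            · rw [if_pos hjl, if_pos hjl]
              rw [show w ℓ (j:ℕ) * (w ℓ (j:ℕ) * βh j / N ℓ) * c
                  = (w ℓ (j:ℕ) * (w ℓ (j:ℕ) * βh j) * c) / N ℓ from by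
                rw [mul_div_assoc', div_mul_eq_mul_div]]
              congr 1
              ring
            · rw [if_neg hjl, if_neg hjl]
              rw [zero_div, zero_mul, zero_mul]
        calc (0:ℝ) ≤ _ := h
          _ = c * (G j + lam * ∑ ℓ ∈ Finset.range (r-1),
              (if (j:ℕ) ≤ ℓ then w ℓ (j:ℕ) else 0) * (w ℓ (j:ℕ) * βh j / N ℓ)) := by
            rw [h1, Finset.sum_congr rfl h2, ← Finset.sum_mul]
            ring
      have hp := hc 1
      have hm' := hc (-1)
      nlinarith [hp, hm']
    -- dual construction on the zero prefix
    set T : Finset ℕ := (Finset.range (r-1)).filter (fun ℓ => ∀ m ∈ gs ℓ, βh m = 0) with hT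
    set pre : Fin r → Prop := fun j => ∀ m : Fin r, (m:ℕ) ≤ (j:ℕ) → βh m = 0 with hpre
    have hpre_lt : ∀ j : Fin r, pre j → (j:ℕ) < r - 1 := by
      intro j hj
      by_contra hge
      have hlt := j.isLt
      have hje : (j:ℕ) = r - 1 := by omega
      have hjrm : j = rm := Fin.ext (by rw [hje])
      have hz := hj j le_rfl
      rw [hjrm] at hz
      exact absurd hz (ne_of_gt hβpos)
    have hprej0 : ∀ j : Fin r, pre j → βh j = 0 := fun j hj => hj j le_rfl
    set u : Fin r → ℝ := fun j => if pre j then -(G j)/lam else 0 with hu_def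
    set cc : ℕ → Fin r → ℝ := fun ℓ j => if ℓ ∈ T ∧ (j:ℕ) ≤ ℓ then w ℓ (j:ℕ) else 0 with hcc
    have hTmem : ∀ ℓ : ℕ, ℓ ∈ T ↔ ℓ < r - 1 ∧ ∀ m ∈ gs ℓ, βh m = 0 := fun ℓ => by
      rw [hT, Finset.mem_filter, Finset.mem_range]
    have hpre_of : ∀ (ℓ : ℕ) (m : Fin r), ℓ ∈ T → (m:ℕ) ≤ ℓ → pre m := by
      intro ℓ m hℓ hm m' hm'
      exact ((hTmem ℓ).1 hℓ).2 m' ((hmemgs ℓ m').2 (le_trans hm' hm))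
    have hkey : ∀ v : Fin r → ℝ, ∑ j : Fin r, u j * v j
        ≤ ∑ ℓ ∈ T, Real.sqrt (∑ m : Fin r, (cc ℓ m * v m) ^ 2) := by
      intro v
      set v' : Fin r → ℝ := fun m => if pre m then v m else 0 with hv'
      have h := hA v'
      have hDs : (∑ ℓ ∈ Finset.range (r-1),
          (if ∀ m ∈ gs ℓ, βh m = 0 then
            Real.sqrt (∑ m ∈ gs ℓ, w ℓ (m:ℕ) ^ 2 * v' m ^ 2)
          else (∑ m ∈ gs ℓ, w ℓ (m:ℕ) ^ 2 * βh m * v' m) /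
            Real.sqrt (∑ m ∈ gs ℓ, w ℓ (m:ℕ) ^ 2 * βh m ^ 2)))
          = ∑ ℓ ∈ T, Real.sqrt (∑ m ∈ gs ℓ, w ℓ (m:ℕ) ^ 2 * v' m ^ 2) := by
        rw [hT, Finset.sum_filter]
        refine Finset.sum_congr rfl fun ℓ hℓ => ?_
        by_cases hz : ∀ m ∈ gs ℓ, βh m = 0
        · rw [if_pos hz, if_pos hz]
        · rw [if_neg hz, if_neg hz]
          have hnum : (∑ m ∈ gs ℓ, w ℓ (m:ℕ) ^ 2 * βh m * v' m) = 0 :=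
            Finset.sum_eq_zero fun m _ => by
              by_cases hp : pre m
              · rw [hv']; simp only [if_pos hp]; rw [hprej0 m hp]; ring
              · rw [hv']; simp only [if_neg hp]; ring
          rw [hnum, zero_div]
      rw [hDs] at h
      have h2 : ∑ j : Fin r, u j * v j = ∑ j : Fin r, (-(G j)/lam) * v' j := by
        refine Finset.sum_congr rfl fun j _ => ?_
        by_cases hp : pre j
        · rw [hu_def, hv']; simp only [if_pos hp]
        · rw [hu_def, hv']; simp only [if_neg hp]; ring
      have h3 : ∑ j : Fin r, (-(G j)/lam) * v' j = (1/lam) * (- ∑ j : Fin r, G j * v' j) := by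
        rw [← Finset.sum_neg_distrib, Finset.mul_sum]
        exact Finset.sum_congr rfl fun j _ => by field_simp
      have h4 : - ∑ j : Fin r, G j * v' j
          ≤ lam * ∑ ℓ ∈ T, Real.sqrt (∑ m ∈ gs ℓ, w ℓ (m:ℕ) ^ 2 * v' m ^ 2) := by linarith
      have h5 : (∑ ℓ ∈ T, Real.sqrt (∑ m ∈ gs ℓ, w ℓ (m:ℕ) ^ 2 * v' m ^ 2))
          = ∑ ℓ ∈ T, Real.sqrt (∑ m : Fin r, (cc ℓ m * v m) ^ 2) := by
        refine Finset.sum_congr rfl fun ℓ hℓ => ?_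
        congr 1
        rw [show (∑ m : Fin r, (cc ℓ m * v m) ^ 2)
            = ∑ m : Fin r, (if (m:ℕ) ≤ ℓ then (w ℓ (m:ℕ) * v m) ^ 2 else 0) from
          Finset.sum_congr rfl fun m _ => by
            rw [hcc]
            by_cases hm : (m:ℕ) ≤ ℓ
            · simp only [hℓ, hm, and_self, if_true, true_and]
            · simp only [hm, and_false, if_false]; ring]
        rw [← Finset.sum_filter]
        refine (Finset.sum_congr rfl fun m hm => ?_).symm
        have hp : pre m := hpre_of ℓ m hℓ ((hmemgs ℓ m).1 hm)
        rw [hv']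
        simp only [if_pos hp]
        ring
      calc ∑ j : Fin r, u j * v j
          = (1/lam) * (- ∑ j : Fin r, G j * v' j) := by rw [h2, h3]
        _ ≤ (1/lam) * (lam * ∑ ℓ ∈ T, Real.sqrt (∑ m ∈ gs ℓ, w ℓ (m:ℕ) ^ 2 * v' m ^ 2)) :=
            mul_le_mul_of_nonneg_left h4 (by positivity)
        _ = ∑ ℓ ∈ T, Real.sqrt (∑ m ∈ gs ℓ, w ℓ (m:ℕ) ^ 2 * v' m ^ 2) := by
            field_simp
        _ = _ := h5
    obtain ⟨b, hb1, hb2⟩ := dual_exists r T cc u hkey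
    refine ⟨fun ℓ m => if (m:ℕ) ≤ ℓ ∧ ℓ < r - 1 then
        (if ∀ m' ∈ gs ℓ, βh m' = 0 then b ℓ m else w ℓ (m:ℕ) * βh m / N ℓ) else 0,
      ?_, ?_, ?_, ?_⟩
    · -- stationarity
      intro j
      show G j + lam * _ = 0
      by_cases hp : pre j
      · have hjlt := hpre_lt j hp
        have hbj := hb2 j
        have huj : u j = -(G j)/lam := by rw [hu_def]; exact if_pos hp
        have hsum : (∑ ℓ ∈ Finset.range (r-1), (if (j:ℕ) ≤ ℓ then w ℓ (j:ℕ) else 0) *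
            (if (j:ℕ) ≤ ℓ ∧ ℓ < r - 1 then
              (if ∀ m' ∈ gs ℓ, βh m' = 0 then b ℓ j else w ℓ (j:ℕ) * βh j / N ℓ) else 0))
            = ∑ ℓ ∈ T, cc ℓ j * b ℓ j := by
          rw [hT, Finset.sum_filter]
          refine Finset.sum_congr rfl fun ℓ hℓ => ?_
          have hℓr := Finset.mem_range.1 hℓ
          by_cases hz : ∀ m ∈ gs ℓ, βh m = 0
          · simp only [if_pos hz]
            have hℓT : ℓ ∈ T := (hTmem ℓ).2 ⟨hℓr, hz⟩
            by_cases hjl : (j:ℕ) ≤ ℓ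
            · simp only [if_pos hjl,
                if_pos (show (j:ℕ) ≤ ℓ ∧ ℓ < r - 1 from ⟨hjl, hℓr⟩), hcc]
              simp only [hℓT, hjl, and_self, if_true, true_and]
            · simp only [if_neg hjl, zero_mul, hcc]
              simp only [hjl, and_false, if_false, zero_mul]
          · simp only [if_neg hz]
            by_cases hjl : (j:ℕ) ≤ ℓ
            · simp only [if_pos hjl,
                if_pos (show (j:ℕ) ≤ ℓ ∧ ℓ < r - 1 from ⟨hjl, hℓr⟩), hprej0 j hp]
              rw [mul_zero, zero_div, mul_zero]
            · simp only [if_neg hjl, zero_mul]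
        rw [hsum, hbj, huj]
        field_simp
        try ring
      · have hnoin : ∀ ℓ, ℓ < r - 1 → (j:ℕ) ≤ ℓ → ¬ (∀ m ∈ gs ℓ, βh m = 0) := by
          intro ℓ hℓ hjl hz
          exact hp (fun m' hm' => hz m' ((hmemgs ℓ m').2 (le_trans hm' hjl)))
        have hst := hstat j hnoin
        have hsum : (∑ ℓ ∈ Finset.range (r-1), (if (j:ℕ) ≤ ℓ then w ℓ (j:ℕ) else 0) *
            (if (j:ℕ) ≤ ℓ ∧ ℓ < r - 1 then
              (if ∀ m' ∈ gs ℓ, βh m' = 0 then b ℓ j else w ℓ (j:ℕ) * βh j / N ℓ) else 0))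
            = ∑ ℓ ∈ Finset.range (r-1),
              (if (j:ℕ) ≤ ℓ then w ℓ (j:ℕ) else 0) * (w ℓ (j:ℕ) * βh j / N ℓ) := by
          refine Finset.sum_congr rfl fun ℓ hℓ => ?_
          have hℓr := Finset.mem_range.1 hℓ
          by_cases hjl : (j:ℕ) ≤ ℓ
          · simp only [if_pos (show (j:ℕ) ≤ ℓ ∧ ℓ < r - 1 from ⟨hjl, hℓr⟩),
              if_neg (hnoin ℓ hℓr hjl)]
          · simp only [if_neg hjl, zero_mul]
        rw [hsum]
        exact hst
    · -- support
      intro ℓ hℓ m hm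
      simp only
      rw [if_neg]
      rintro ⟨h1, _⟩
      omega
    · -- active formula
      intro ℓ hℓ hnz m hm
      simp only
      rw [if_pos (show (m:ℕ) ≤ ℓ ∧ ℓ < r - 1 from ⟨hm, hℓ⟩),
        if_neg (show ¬ ∀ m' ∈ gs ℓ, βh m' = 0 from
          fun hall => hnz (fun m' hm' => hall m' ((hmemgs ℓ m').2 hm')))]
    · -- inactive norm bound
      intro ℓ hℓ hz
      have hz' : ∀ m' ∈ gs ℓ, βh m' = 0 := fun m' hm' => hz m' ((hmemgs ℓ m').1 hm')
      have he : (∑ m ∈ Finset.univ.filter (fun m : Fin r => (m:ℕ) ≤ ℓ),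
          (if (m:ℕ) ≤ ℓ ∧ ℓ < r - 1 then
            (if ∀ m' ∈ gs ℓ, βh m' = 0 then b ℓ m else w ℓ (m:ℕ) * βh m / N ℓ) else 0) ^ 2)
          = ∑ m ∈ gs ℓ, (b ℓ m) ^ 2 := by
        refine Finset.sum_congr rfl fun m hm => ?_
        rw [if_pos (show (m:ℕ) ≤ ℓ ∧ ℓ < r - 1 from ⟨(hmemgs ℓ m).1 hm, hℓ⟩), if_pos hz']
      rw [he]
      have hle : (∑ m ∈ gs ℓ, (b ℓ m) ^ 2) ≤ ∑ m : Fin r, (b ℓ m) ^ 2 :=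
        Finset.sum_le_sum_of_subset_of_nonneg (Finset.filter_subset _ _)
          (fun m _ _ => sq_nonneg _)
      have h1 := hb1 ℓ ((hTmem ℓ).2 ⟨hℓ, hz'⟩)
      calc Real.sqrt (∑ m ∈ gs ℓ, (b ℓ m) ^ 2) ≤ Real.sqrt 1 :=
            Real.sqrt_le_sqrt (le_trans hle h1)
        _ = 1 := Real.sqrt_one
  · rintro ⟨a, ha1, ha2, ha3, ha4⟩
    exact lemB n r hr2 Xr lam hlam w hw F hF βh hβpos a ha1 ha3 ha4
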